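/- The shuffle algebra ⊕_{d≥0} Q[x_1,...,x_d]^{S_d} with product (f*g)(x_1,...,x_{d+e}) = Σ_{(d,e)-shuffles σ} f(x_{σ(1)},...,x_{σ(d)}) g(x_{σ(d+1)},...,x_{σ(d+e)}) Π_{1≤μ≤d<ν≤d+e}(x_{σ(ν)} − x_{σ(μ)})^{−1} is isomorphic, as a graded algebra, to the exterior algebra over Q on generators ψ_0, ψ_1, ψ_2, ..., where ψ_i ∈ degree-1 component Q[x] is x^i. -/

import Mathlib

open MvPolynomial

attribute [local instance] Classical.propDecidable

noncomputable abbrev FF (d : ℕ) : Type := FractionRing (MvPolynomial (Fin d) ℚ)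

/-- Extension of variable renaming along an injection to fraction fields. -/
noncomputable def embF {σ τ : Type} (v : σ → τ) (hv : Function.Injective v) :
    FractionRing (MvPolynomial σ ℚ) →+* FractionRing (MvPolynomial τ ℚ) :=
  IsFractionRing.lift (g := (algebraMap (MvPolynomial τ ℚ)
      (FractionRing (MvPolynomial τ ℚ))).comp (rename v).toRingHom)
    ((IsFractionRing.injective (MvPolynomial τ ℚ)
        (FractionRing (MvPolynomial τ ℚ))).comp (rename_injective v hv))

/-- `(d,e)`-shuffles. -/
def IsShuffle {d e : ℕ} (σ : Equiv.Perm (Fin (d + e))) : Prop :=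
  StrictMono (fun i : Fin d => σ (Fin.castAdd e i)) ∧
    StrictMono (fun j : Fin e => σ (Fin.natAdd d j))

/-- The CoHa shuffle product of the one-vertex quiver with no arrows,
`(f*g) = Σ_σ f(x_{σ(1)},…) g(x_{σ(d+1)},…) · Π_{μ≤d<ν}(x_{σ(ν)} − x_{σ(μ)})⁻¹`. -/
noncomputable def shuffleMul {d e : ℕ} (f : FF d) (g : FF e) : FF (d + e) :=
  ∑ σ ∈ Finset.univ.filter (fun σ : Equiv.Perm (Fin (d + e)) => IsShuffle σ),
    embF (fun i : Fin d => σ (Fin.castAdd e i))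
        (σ.injective.comp (Fin.castAdd_injective d e)) f *
      embF (fun j : Fin e => σ (Fin.natAdd d j))
        (σ.injective.comp (Fin.natAddEmb d).injective) g *
      (algebraMap (MvPolynomial (Fin (d + e)) ℚ) (FF (d + e))
        (∏ μ : Fin d, ∏ ν : Fin e,
          (X (σ (Fin.natAdd d ν)) - X (σ (Fin.castAdd e μ)))))⁻¹

/-- `ψ_i ∈ H_1 = ℚ[x]`, `ψ_i(x) = x^i`. -/
noncomputable def psiF (i : ℕ) : FF 1 :=
  algebraMap (MvPolynomial (Fin 1) ℚ) (FF 1) (X 0 ^ i)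

/-- Iterated shuffle product `ψ_{k_1} * ⋯ * ψ_{k_d}`. -/
noncomputable def iterProd : (d : ℕ) → (Fin d → ℕ) → FF d
  | 0, _ => 1
  | d + 1, k => shuffleMul (iterProd d (fun i => k i.castSucc)) (psiF (k (Fin.last d)))

/-- The degree-`d` component of the CoHa: (the image in the fraction field of)
the symmetric polynomials `ℚ[x_1,…,x_d]^{S_d}`. -/
noncomputable def symPart (d : ℕ) : Submodule ℚ (FF d) :=
  Submodule.span ℚ {z : FF d | ∃ p : MvPolynomial (Fin d) ℚ,
    p.IsSymmetric ∧ algebraMap (MvPolynomial (Fin d) ℚ) (FF d) p = z}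


noncomputable def VD (d : ℕ) : MvPolynomial (Fin d) ℚ :=
  ∏ i, ∏ j ∈ Finset.Ioi i, (X j - X i)

lemma prod_rename_VD {d : ℕ} (w : Equiv.Perm (Fin d)) :
    (∏ i, ∏ j ∈ Finset.Ioi i, (X (w j) - X (w i) : MvPolynomial (Fin d) ℚ))
      = (Equiv.Perm.sign w : ℤ) • VD d := by
  have h1 := Matrix.det_vandermonde (fun i => (X (w i) : MvPolynomial (Fin d) ℚ))
  have h2 := Matrix.det_permute w (Matrix.vandermonde (X : Fin d → MvPolynomial (Fin d) ℚ))
  have h3 : Matrix.vandermonde (fun i => (X (w i) : MvPolynomial (Fin d) ℚ))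
      = (Matrix.vandermonde (X : Fin d → MvPolynomial (Fin d) ℚ)).submatrix w id := by
    ext i j; simp [Matrix.vandermonde]
  have h4 := Matrix.det_vandermonde (X : Fin d → MvPolynomial (Fin d) ℚ)
  rw [h3, h2, h4] at h1
  rw [← h1, VD]
  simp [zsmul_eq_mul]

-- extension of a permutation of Fin d to Fin (d+1) fixing the last point
noncomputable def extP {d : ℕ} (π : Equiv.Perm (Fin d)) : Equiv.Perm (Fin (d + 1)) :=
  (finSumFinEquiv (m := d) (n := 1)).permCongr (Equiv.sumCongr π (Equiv.refl (Fin 1)))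

lemma extP_castAdd {d : ℕ} (π : Equiv.Perm (Fin d)) (i : Fin d) :
    extP π (Fin.castAdd 1 i) = Fin.castAdd 1 (π i) := by
  simp [extP, Equiv.permCongr_apply]

lemma extP_natAdd {d : ℕ} (π : Equiv.Perm (Fin d)) (j : Fin 1) :
    extP π (Fin.natAdd d j) = Fin.natAdd d j := by
  simp [extP, Equiv.permCongr_apply]

lemma extP_mul {d : ℕ} (π ρ : Equiv.Perm (Fin d)) : extP (π * ρ) = extP π * extP ρ := by
  ext x
  simp [extP, Equiv.permCongr_apply, Equiv.sumCongr_apply]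

lemma extP_one {d : ℕ} : extP (1 : Equiv.Perm (Fin d)) = 1 := by
  ext x; simp [extP, Equiv.permCongr_apply]

lemma extP_sign {d : ℕ} (π : Equiv.Perm (Fin d)) :
    Equiv.Perm.sign (extP π) = Equiv.Perm.sign π := by
  simp [extP, Equiv.Perm.sign_permCongr, Equiv.Perm.sign_sumCongr]

lemma strictMono_fin_one {α : Type*} [Preorder α] (f : Fin 1 → α) : StrictMono f := by
  intro a b h
  rw [Subsingleton.elim a b] at h
  exact absurd h (lt_irrefl b)

lemma shuffle_inj {d : ℕ} {σ σ' : Equiv.Perm (Fin (d + 1))} {w w' : Equiv.Perm (Fin d)}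
    (hσ : IsShuffle (d := d) (e := 1) σ) (hσ' : IsShuffle (d := d) (e := 1) σ')
    (h : σ * extP w = σ' * extP w') : σ = σ' ∧ w = w' := by
  have h1 : ∀ i : Fin d, σ (Fin.castAdd 1 (w i)) = σ' (Fin.castAdd 1 (w' i)) := by
    intro i
    have := congrArg (fun u : Equiv.Perm (Fin (d+1)) => u (Fin.castAdd 1 i)) h
    simpa [Equiv.Perm.mul_apply, extP_castAdd] using this
  have h2 : ∀ j : Fin 1, σ (Fin.natAdd d j) = σ' (Fin.natAdd d j) := by
    intro j
    have := congrArg (fun u : Equiv.Perm (Fin (d+1)) => u (Fin.natAdd d j)) h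
    simpa [Equiv.Perm.mul_apply, extP_natAdd] using this
  have hwf : WellFoundedLT (Fin d) := Finite.to_wellFoundedLT
  have hFG : (fun i : Fin d => σ (Fin.castAdd 1 i)) = (fun i : Fin d => σ' (Fin.castAdd 1 i)) := by
    refine (hσ.1.range_inj hσ'.1).mp ?_
    have e1 : Set.range (fun i : Fin d => σ (Fin.castAdd 1 i))
        = Set.range ((fun i : Fin d => σ (Fin.castAdd 1 i)) ∘ ⇑w) :=
      (Function.Surjective.range_comp w.surjective _).symm
    have e2 : Set.range (fun i : Fin d => σ' (Fin.castAdd 1 i))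
        = Set.range ((fun i : Fin d => σ' (Fin.castAdd 1 i)) ∘ ⇑w') :=
      (Function.Surjective.range_comp w'.surjective _).symm
    have e3 : ((fun i : Fin d => σ (Fin.castAdd 1 i)) ∘ ⇑w)
        = ((fun i : Fin d => σ' (Fin.castAdd 1 i)) ∘ ⇑w') := funext h1
    rw [e1, e2, e3]
  have hw : w = w' := by
    ext i
    have ha : σ (Fin.castAdd 1 (w i)) = σ (Fin.castAdd 1 (w' i)) := by
      rw [h1 i, ← congrFun hFG (w' i)]
    have := Fin.castAdd_injective d 1 (σ.injective ha)
    exact congrArg Fin.val this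
  refine ⟨?_, hw⟩
  ext x
  refine Fin.addCases (fun i => ?_) (fun j => ?_) x
  · exact congrArg Fin.val (congrFun hFG i)
  · exact congrArg Fin.val (h2 j)

lemma sum_shuffles {d : ℕ} {M : Type*} [AddCommMonoid M] (F : Equiv.Perm (Fin (d + 1)) → M) :
    ∑ σ ∈ Finset.univ.filter (fun σ : Equiv.Perm (Fin (d + 1)) => IsShuffle (d := d) (e := 1) σ),
      ∑ w : Equiv.Perm (Fin d), F (σ * extP w) = ∑ ρ, F ρ := by
  rw [← Finset.sum_product']
  refine Finset.sum_nbij (fun p => p.1 * extP p.2) ?_ ?_ ?_ ?_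
  · intro p _; exact Finset.mem_univ _
  · intro p hp q hq hpq
    simp only [Finset.mem_coe, Finset.mem_product, Finset.mem_filter] at hp hq
    obtain ⟨h1, h2⟩ := shuffle_inj hp.1.2 hq.1.2 hpq
    exact Prod.ext h1 h2
  · intro ρ _
    refine ⟨(ρ * extP (Tuple.sort fun i : Fin d => ρ (Fin.castAdd 1 i)),
        (Tuple.sort fun i : Fin d => ρ (Fin.castAdd 1 i))⁻¹), ?_, ?_⟩
    · simp only [Finset.coe_product, Set.mem_prod, Finset.mem_coe, Finset.mem_filter,
        Finset.mem_univ, true_and]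
      refine ⟨⟨?_, strictMono_fin_one _⟩, trivial⟩
      have : (fun i : Fin d => (ρ * extP (Tuple.sort fun i : Fin d => ρ (Fin.castAdd 1 i)))
            (Fin.castAdd 1 i))
          = (fun i : Fin d => ρ (Fin.castAdd 1 i)) ∘ ⇑(Tuple.sort fun i : Fin d => ρ (Fin.castAdd 1 i)) := by
        funext i; simp [Equiv.Perm.mul_apply, extP_castAdd]
      rw [this]
      refine (Tuple.monotone_sort _).strictMono_of_injective ?_
      exact ((ρ.injective.comp (Fin.castAdd_injective d 1)).comp (Equiv.injective _))
    · dsimp only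
      rw [mul_assoc]
      rw [← extP_mul, mul_inv_cancel, extP_one, mul_one]
  · intro p _; rfl

-- splitting the product over pairs of Fin (n+1)
lemma prod_Ioi_castSucc_split {M : Type*} [CommMonoid M] {n : ℕ} (i : Fin n)
    (g : Fin (n + 1) → M) :
    ∏ j ∈ Finset.Ioi i.castSucc, g j
      = (∏ j ∈ Finset.Ioi i, g j.castSucc) * g (Fin.last n) := by
  have h1 : Finset.Ioi i.castSucc = Finset.filter (fun j => i.castSucc < j) Finset.univ := by
    ext j; simp
  have h2 : Finset.Ioi i = Finset.filter (fun j => i < j) Finset.univ := by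
    ext j; simp
  rw [h1, h2, Finset.prod_filter, Finset.prod_filter, Fin.prod_univ_castSucc]
  simp [Fin.castSucc_lt_castSucc_iff, Fin.castSucc_lt_last]

lemma prod_pairs_split {M : Type*} [CommMonoid M] {n : ℕ} (f : Fin (n + 1) → Fin (n + 1) → M) :
    ∏ i, ∏ j ∈ Finset.Ioi i, f i j
      = (∏ i : Fin n, ∏ j ∈ Finset.Ioi i, f i.castSucc j.castSucc)
        * ∏ i : Fin n, f i.castSucc (Fin.last n) := by
  rw [Fin.prod_univ_castSucc]
  have : Finset.Ioi (Fin.last n) = ∅ := by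
    ext j; simp [Fin.lt_iff_val_lt_val, Fin.le_last, Nat.lt_irrefl]
    exact Fin.le_last j
  rw [this]
  simp only [Finset.prod_empty, mul_one]
  rw [← Finset.prod_mul_distrib]
  congr 1; funext i
  exact prod_Ioi_castSucc_split i (f i.castSucc)

lemma embF_algebraMap {σ τ : Type} (v : σ → τ) (hv : Function.Injective v) (p : MvPolynomial σ ℚ) :
    embF v hv (algebraMap _ _ p) = algebraMap _ _ (rename v p) := by
  simp [embF, IsFractionRing.lift_algebraMap]

lemma prod_X_pow_monomial {σ : Type*} [Fintype σ] [DecidableEq σ] {τ : Type*} [DecidableEq τ]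
    (e : σ → τ) (k : σ → ℕ) :
    ∏ i, (X (e i) : MvPolynomial τ ℚ) ^ k i
      = monomial (∑ i, Finsupp.single (e i) (k i)) 1 := by
  induction (Finset.univ : Finset σ) using Finset.induction_on with
  | empty => simp [monomial_eq]
  | insert a s h ih =>
    rw [Finset.prod_insert h, Finset.sum_insert h, ih, X_pow_eq_monomial, monomial_mul, one_mul]

lemma sign_smul_inv {n : ℕ} (s : ℤˣ) (v : FF n) : (((s : ℤ) • v))⁻¹ = (s : ℤ) • v⁻¹ := by
  rcases Int.units_eq_one_or s with h | h <;> simp [h, inv_neg]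

lemma den_combine {d : ℕ} (σ : Equiv.Perm (Fin (d+1))) :
    (∏ i, ∏ j ∈ Finset.Ioi i,
        ((X (σ (Fin.castAdd 1 j)) : MvPolynomial (Fin (d+1)) ℚ) - X (σ (Fin.castAdd 1 i))))
      * ∏ μ : Fin d, ∏ ν : Fin 1, (X (σ (Fin.natAdd d ν)) - X (σ (Fin.castAdd 1 μ)))
    = (Equiv.Perm.sign σ : ℤ) • VD (d+1) := by
  rw [← prod_rename_VD σ, prod_pairs_split (fun i j => (X (σ j) : MvPolynomial (Fin (d+1)) ℚ) - X (σ i))]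
  congr 1
  refine Finset.prod_congr rfl fun μ _ => ?_
  rw [Fin.prod_univ_one]
  rfl

lemma num_combine {d : ℕ} (σ : Equiv.Perm (Fin (d+1))) (w : Equiv.Perm (Fin d))
    (k : Fin (d+1) → ℕ) :
    (∏ i : Fin d, (X (σ (Fin.castAdd 1 (w i))) : MvPolynomial (Fin (d+1)) ℚ) ^ k i.castSucc)
      * X (σ (Fin.natAdd d 0)) ^ k (Fin.last d)
    = ∏ i : Fin (d+1), X ((σ * extP w) i) ^ k i := by
  rw [Fin.prod_univ_castSucc]
  congr 1
  · refine Finset.prod_congr rfl fun i _ => ?_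
    rw [show (σ * extP w) i.castSucc = σ (Fin.castAdd 1 (w i)) by
      rw [Equiv.Perm.mul_apply]; exact congrArg σ (extP_castAdd w i)]
  · rw [show (σ * extP w) (Fin.last d) = σ (Fin.natAdd d 0) by
      rw [Equiv.Perm.mul_apply]; exact congrArg σ (extP_natAdd w 0)]

set_option maxHeartbeats 2000000 in
theorem iterProd_formula (d : ℕ) : ∀ k : Fin d → ℕ,
    iterProd d k = (∑ w : Equiv.Perm (Fin d), (Equiv.Perm.sign w : ℤ) •
        (algebraMap (MvPolynomial (Fin d) ℚ) (FF d) (∏ i, X (w i) ^ k i)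
          * (algebraMap (MvPolynomial (Fin d) ℚ) (FF d) (VD d))⁻¹)) := by
  induction d with
  | zero =>
    intro k
    rw [show iterProd 0 k = 1 from rfl]
    rw [Finset.sum_eq_single_of_mem (1 : Equiv.Perm (Fin 0)) (Finset.mem_univ _)
      (fun b _ hb => absurd (Subsingleton.elim b 1) hb)]
    simp [VD]
  | succ d ih =>
    intro k
    rw [show iterProd (d+1) k
      = shuffleMul (iterProd d (fun i => k i.castSucc)) (psiF (k (Fin.last d))) from rfl]
    rw [ih]
    rw [shuffleMul]
    rw [← sum_shuffles (fun ρ => (Equiv.Perm.sign ρ : ℤ) •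
      (algebraMap (MvPolynomial (Fin (d+1)) ℚ) (FF (d+1)) (∏ i, X (ρ i) ^ k i)
        * (algebraMap (MvPolynomial (Fin (d+1)) ℚ) (FF (d+1)) (VD (d+1)))⁻¹))]
    refine Finset.sum_congr rfl ?_
    intro σ hσ
    rw [map_sum, Finset.sum_mul, Finset.sum_mul]
    refine Finset.sum_congr rfl ?_
    intro w _
    rw [map_zsmul, map_mul, map_inv₀, embF_algebraMap, embF_algebraMap, psiF, embF_algebraMap]
    have hren1 : rename (fun i => σ (Fin.castAdd 1 i)) (∏ i, (X (w i) : MvPolynomial (Fin d) ℚ) ^ k i.castSucc)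
        = ∏ i : Fin d, (X (σ (Fin.castAdd 1 (w i))) : MvPolynomial (Fin (d+1)) ℚ) ^ k i.castSucc := by
      simp only [map_prod, map_pow, rename_X]
    have hren2 : rename (fun i => σ (Fin.castAdd 1 i)) (VD d)
        = ∏ i, ∏ j ∈ Finset.Ioi i,
            ((X (σ (Fin.castAdd 1 j)) : MvPolynomial (Fin (d+1)) ℚ) - X (σ (Fin.castAdd 1 i))) := by
      simp only [VD, map_prod, map_sub, rename_X]
    have hren3 : rename (fun j : Fin 1 => σ (Fin.natAdd d j)) ((X 0 : MvPolynomial (Fin 1) ℚ) ^ k (Fin.last d))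
        = (X (σ (Fin.natAdd d 0)) : MvPolynomial (Fin (d+1)) ℚ) ^ k (Fin.last d) := by
      simp only [map_pow, rename_X]
    rw [hren1, hren2, hren3]
    rw [show Equiv.Perm.sign (σ * extP w) = Equiv.Perm.sign σ * Equiv.Perm.sign w by
      rw [map_mul, extP_sign]]
    rw [smul_mul_assoc, smul_mul_assoc]
    rw [mul_assoc, mul_mul_mul_comm, ← mul_inv, ← map_mul, ← map_mul, den_combine σ, map_zsmul,
      sign_smul_inv, num_combine σ w k, mul_smul_comm]
    push_cast
    module

noncomputable def aD (d : ℕ) (k : Fin d → ℕ) : MvPolynomial (Fin d) ℚ :=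
  ∑ w : Equiv.Perm (Fin d), (Equiv.Perm.sign w : ℤ) • ∏ i, X (w i) ^ k i

lemma iterProd_eq_aD (d : ℕ) (k : Fin d → ℕ) :
    iterProd d k = algebraMap (MvPolynomial (Fin d) ℚ) (FF d) (aD d k)
      * (algebraMap (MvPolynomial (Fin d) ℚ) (FF d) (VD d))⁻¹ := by
  rw [iterProd_formula, aD, map_sum, Finset.sum_mul]
  refine Finset.sum_congr rfl fun w _ => ?_
  rw [map_zsmul, smul_mul_assoc]

lemma aD_monomial (d : ℕ) (k : Fin d → ℕ) :
    aD d k = ∑ w : Equiv.Perm (Fin d),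
      (Equiv.Perm.sign w : ℤ) • (monomial (∑ i, Finsupp.single (w i) (k i)) (1 : ℚ)) := by
  unfold aD
  refine Finset.sum_congr rfl fun w _ => ?_
  rw [prod_X_pow_monomial]

lemma sum_single_perm_apply {d : ℕ} (w : Equiv.Perm (Fin d)) (l : Fin d → ℕ) (t : Fin d) :
    (∑ i, Finsupp.single (w i) (l i)) t = l (w⁻¹ t) := by
  rw [Finsupp.finset_sum_apply]
  rw [Finset.sum_eq_single (w⁻¹ t)]
  · simp [Finsupp.single_apply]
  · intro b _ hb
    rw [Finsupp.single_apply, if_neg]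
    intro h
    exact hb (by rw [← h]; simp)
  · simp

lemma perm_eq_one_of_compat {d : ℕ} {k l : Fin d → ℕ} (hk : StrictMono k) (hl : StrictMono l)
    {w : Equiv.Perm (Fin d)} (h : ∀ t, l (w⁻¹ t) = k t) : w = 1 ∧ k = l := by
  have hwf : WellFoundedLT (Fin d) := Finite.to_wellFoundedLT
  have hsm : StrictMono (⇑w⁻¹) := by
    intro a b hab
    have : l (w⁻¹ a) < l (w⁻¹ b) := by rw [h a, h b]; exact hk hab
    exact hl.lt_iff_lt.mp this
  have hid : ⇑w⁻¹ = id := by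
    refine (hsm.range_inj strictMono_id).mp ?_
    rw [Set.range_id, Set.range_eq_univ]
    exact w⁻¹.surjective
  have hw1 : w = 1 := by
    have : w⁻¹ = 1 := Equiv.ext fun x => by rw [show ⇑w⁻¹ = id from hid]; rfl
    simpa using congrArg (·⁻¹) this
  refine ⟨hw1, funext fun t => ?_⟩
  rw [← h t, hid]; rfl

lemma aD_coeff {d : ℕ} {k l : Fin d → ℕ} (hk : StrictMono k) (hl : StrictMono l) :
    coeff (∑ i, Finsupp.single i (k i)) (aD d l) = if k = l then 1 else 0 := by
  rw [aD_monomial]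
  rw [show coeff (∑ i, Finsupp.single i (k i))
      (∑ w : Equiv.Perm (Fin d),
        (Equiv.Perm.sign w : ℤ) • (monomial (∑ i, Finsupp.single (w i) (l i)) (1 : ℚ)))
    = ∑ w : Equiv.Perm (Fin d),
        (Equiv.Perm.sign w : ℤ) • coeff (∑ i, Finsupp.single i (k i))
          (monomial (∑ i, Finsupp.single (w i) (l i)) (1 : ℚ)) by
    rw [MvPolynomial.coeff_sum]
    exact Finset.sum_congr rfl fun w _ => (MvPolynomial.coeff_smul _ _ _)]
  have hcond : ∀ w : Equiv.Perm (Fin d),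
      ((∑ i, Finsupp.single (w i) (l i)) = ∑ i, Finsupp.single i (k i)) ↔ ∀ t, l (w⁻¹ t) = k t := by
    intro w
    constructor
    · intro h t
      have := congrArg (fun m : Fin d →₀ ℕ => m t) h
      have h1 := sum_single_perm_apply w l t
      have h2 := sum_single_perm_apply 1 k t
      simp only [Equiv.Perm.one_apply, inv_one, Equiv.Perm.coe_one, id_eq] at h2
      rw [h1] at this
      rw [this, h2]
    · intro h
      ext t
      rw [sum_single_perm_apply, h t]
      have := sum_single_perm_apply 1 k t
      simpa using this.symm
  by_cases hkl : k = l
  · subst hkl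
    rw [if_pos rfl]
    rw [Finset.sum_eq_single (1 : Equiv.Perm (Fin d))]
    · rw [coeff_monomial, if_pos]
      · simp
      · rw [hcond]; intro t; simp
    · intro w _ hw
      rw [coeff_monomial, if_neg, smul_zero]
      intro hc
      exact hw (perm_eq_one_of_compat hk hk ((hcond w).mp hc)).1
    · simp
  · rw [if_neg hkl]
    refine Finset.sum_eq_zero fun w _ => ?_
    rw [coeff_monomial, if_neg, smul_zero]
    intro hc
    exact hkl (perm_eq_one_of_compat hk hl ((hcond w).mp hc)).2

lemma aD_linearIndependent (d : ℕ) :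
    LinearIndependent ℚ (fun k : {k : Fin d → ℕ // StrictMono k} => aD d k.1) := by
  rw [linearIndependent_iff']
  intro s g hsum ksub hks
  have := congrArg (coeff (∑ i, Finsupp.single i (ksub.1 i))) hsum
  rw [MvPolynomial.coeff_sum] at this
  rw [show coeff (∑ i, Finsupp.single i (ksub.1 i)) (0 : MvPolynomial (Fin d) ℚ) = 0 from rfl] at this
  rw [Finset.sum_eq_single ksub] at this
  · rw [MvPolynomial.coeff_smul, aD_coeff ksub.2 ksub.2, if_pos rfl] at this
    simpa using this
  · intro b _ hb
    rw [MvPolynomial.coeff_smul, aD_coeff ksub.2 b.2, if_neg, smul_zero]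
    intro h
    exact hb (Subtype.ext h.symm)
  · intro h; exact absurd hks h

lemma rename_perm_VD {d : ℕ} (π : Equiv.Perm (Fin d)) :
    rename ⇑π (VD d) = (Equiv.Perm.sign π : ℤ) • VD d := by
  have h : rename ⇑π (VD d) = ∏ i, ∏ j ∈ Finset.Ioi i,
      ((X (π j) : MvPolynomial (Fin d) ℚ) - X (π i)) := by
    simp only [VD, map_prod, map_sub, rename_X]
  rw [h, prod_rename_VD]

lemma rename_perm_aD {d : ℕ} (k : Fin d → ℕ) (π : Equiv.Perm (Fin d)) :
    rename ⇑π (aD d k) = (Equiv.Perm.sign π : ℤ) • aD d k := by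
  rw [aD, map_sum]
  have hterm : ∀ w : Equiv.Perm (Fin d),
      rename ⇑π ((Equiv.Perm.sign w : ℤ) • ∏ i, (X (w i) : MvPolynomial (Fin d) ℚ) ^ k i)
      = (Equiv.Perm.sign w : ℤ) • ∏ i, (X ((π * w) i) : MvPolynomial (Fin d) ℚ) ^ k i := by
    intro w
    rw [map_zsmul]
    congr 1
    simp only [map_prod, map_pow, rename_X]
    rfl
  rw [Finset.sum_congr rfl (fun w _ => hterm w)]
  rw [← Equiv.sum_comp (Equiv.mulLeft π⁻¹)
    (fun w => (Equiv.Perm.sign w : ℤ) • ∏ i, (X ((π * w) i) : MvPolynomial (Fin d) ℚ) ^ k i)]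
  rw [Finset.smul_sum]
  refine Finset.sum_congr rfl fun u _ => ?_
  simp only [Equiv.coe_mulLeft]
  rw [show π * (π⁻¹ * u) = u by group]
  rw [map_mul, map_inv, Int.units_inv_eq_self]
  push_cast
  module

lemma aD_comp_perm {d : ℕ} (k : Fin d → ℕ) (π : Equiv.Perm (Fin d)) :
    aD d (fun i => k (π i)) = (Equiv.Perm.sign π : ℤ) • aD d k := by
  unfold aD
  have hterm : ∀ w : Equiv.Perm (Fin d),
      (∏ i, (X (w i) : MvPolynomial (Fin d) ℚ) ^ k (π i))
      = ∏ i, (X ((w * π⁻¹) i) : MvPolynomial (Fin d) ℚ) ^ k i := by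
    intro w
    rw [← Equiv.prod_comp π (fun i => (X ((w * π⁻¹) i) : MvPolynomial (Fin d) ℚ) ^ k i)]
    refine Finset.prod_congr rfl fun i _ => ?_
    simp [Equiv.Perm.mul_apply]
  rw [Finset.sum_congr rfl (fun w _ => by rw [hterm w])]
  rw [← Equiv.sum_comp (Equiv.mulRight π)
    (fun w => (Equiv.Perm.sign w : ℤ) • ∏ i, (X ((w * π⁻¹) i) : MvPolynomial (Fin d) ℚ) ^ k i)]
  rw [Finset.smul_sum]
  refine Finset.sum_congr rfl fun u _ => ?_
  simp only [Equiv.coe_mulRight]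
  rw [show u * π * π⁻¹ = u by group]
  rw [map_mul]
  rw [smul_smul]
  push_cast
  ring_nf

lemma VD_ne_zero (d : ℕ) : VD d ≠ 0 := by
  rw [VD]
  rw [Finset.prod_ne_zero_iff]
  intro i _
  rw [Finset.prod_ne_zero_iff]
  intro j hj
  rw [Finset.mem_Ioi] at hj
  exact sub_ne_zero.mpr fun h => absurd (MvPolynomial.X_injective h) (ne_of_gt hj)

noncomputable def subMap (d : ℕ) (i j : Fin d) :
    MvPolynomial (Fin d) ℚ →ₐ[ℚ] MvPolynomial (Fin d) ℚ :=
  aeval (fun t => if t = i then X j else X t)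

lemma subMap_X (d : ℕ) (i j t : Fin d) :
    subMap d i j (X t) = if t = i then X j else X t := by
  simp [subMap]

lemma subMap_dvd {d : ℕ} (i j : Fin d) (p : MvPolynomial (Fin d) ℚ) :
    (X j - X i) ∣ (p - subMap d i j p) := by
  induction p using MvPolynomial.induction_on with
  | C a => simp [subMap]
  | add p q hp hq =>
    have : p + q - subMap d i j (p + q) = (p - subMap d i j p) + (q - subMap d i j q) := by
      rw [map_add]; ring
    rw [this]; exact dvd_add hp hq
  | mul_X p n hp =>
    by_cases hn : n = i
    · have heq : p * X n - subMap d i j (p * X n)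
          = (p - subMap d i j p) * X j + p * (X n - X j) := by
        rw [map_mul, subMap_X, if_pos hn]; ring
      rw [heq]
      refine dvd_add (dvd_mul_of_dvd_left hp _) ?_
      have hneg : (X n - X j : MvPolynomial (Fin d) ℚ) = -(X j - X i) := by rw [hn]; ring
      rw [hneg]
      exact Dvd.dvd.mul_left (dvd_neg.mpr dvd_rfl) p
    · have heq : p * X n - subMap d i j (p * X n) = (p - subMap d i j p) * X n := by
        rw [map_mul, subMap_X, if_neg hn]; ring
      rw [heq]
      exact dvd_mul_of_dvd_left hp _

lemma subMap_dvd_iff {d : ℕ} (i j : Fin d) (hij : j ≠ i) (p : MvPolynomial (Fin d) ℚ) :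
    (X j - X i) ∣ p ↔ subMap d i j p = 0 := by
  constructor
  · rintro ⟨r, rfl⟩
    rw [map_mul, map_sub, subMap_X, subMap_X, if_neg hij, if_pos rfl, sub_self, zero_mul]
  · intro h
    have := subMap_dvd i j p
    rwa [h, sub_zero] at this

lemma prime_X_sub {d : ℕ} (i j : Fin d) (hij : j ≠ i) :
    Prime (X j - X i : MvPolynomial (Fin d) ℚ) := by
  refine ⟨sub_ne_zero.mpr fun h => absurd (MvPolynomial.X_injective h) hij, ?_, ?_⟩
  · intro h
    have h1 : (X j - X i : MvPolynomial (Fin d) ℚ) ∣ 1 := h.dvd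
    rw [subMap_dvd_iff i j hij] at h1
    rw [map_one] at h1
    exact one_ne_zero h1
  · intro a b hab
    rw [subMap_dvd_iff i j hij] at hab ⊢
    rw [subMap_dvd_iff i j hij]
    rw [map_mul] at hab
    exact mul_eq_zero.mp hab

lemma not_dvd_pairs {d : ℕ} {i j k l : Fin d} (hij : i < j) (hkl : k < l)
    (hne : (i, j) ≠ (k, l)) : ¬ ((X j - X i : MvPolynomial (Fin d) ℚ) ∣ (X l - X k)) := by
  rintro ⟨r, hr⟩
  by_cases hl : l = i ∨ l = j
  · have hk : k ≠ i ∧ k ≠ j := by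
      constructor
      · intro h
        rcases hl with h' | h'
        · exact absurd (h' ▸ h ▸ hkl) (lt_irrefl _)
        · exact hne (by rw [h, ← h'])
      · intro h
        rcases hl with h' | h'
        · rw [h, h'] at hkl
          exact absurd hkl (asymm hij)
        · rw [h, h'] at hkl
          exact absurd hkl (lt_irrefl _)
    have := congrArg (eval (fun t => if t = k then (1 : ℚ) else 0)) hr
    rw [map_sub, map_mul, map_sub] at this
    simp only [eval_X] at this
    simp [hkl.ne', Ne.symm hk.1, Ne.symm hk.2] at this
  · push_neg at hl
    have := congrArg (eval (fun t => if t = l then (1 : ℚ) else 0)) hr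
    rw [map_sub, map_mul, map_sub] at this
    simp only [eval_X] at this
    simp [hkl.ne, Ne.symm hl.1, Ne.symm hl.2] at this

lemma prod_primes_dvd'' {ι : Type*} {R : Type*} [CommRing R] [IsDomain R]
    (s : Finset ι) (f : ι → R) :
    ∀ n : R, (∀ a ∈ s, Prime (f a)) → (∀ a ∈ s, f a ∣ n) →
      (∀ a ∈ s, ∀ b ∈ s, a ≠ b → ¬ f a ∣ f b) → (∏ a ∈ s, f a) ∣ n := by
  classical
  induction s using Finset.induction_on with
  | empty => simp
  | insert a s ha ih =>
    intro n hp hd hnd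
    have h1 : (∏ b ∈ s, f b) ∣ n :=
      ih n (fun b hb => hp b (Finset.mem_insert_of_mem hb))
        (fun b hb => hd b (Finset.mem_insert_of_mem hb))
        (fun b hb c hc hbc => hnd b (Finset.mem_insert_of_mem hb) c (Finset.mem_insert_of_mem hc) hbc)
    obtain ⟨m, hm⟩ := h1
    have hpa : Prime (f a) := hp a (Finset.mem_insert_self a s)
    have h2 : f a ∣ m := by
      have hdn : f a ∣ (∏ b ∈ s, f b) * m := hm ▸ hd a (Finset.mem_insert_self a s)
      rcases hpa.2.2 _ _ hdn with h | h
      · exfalso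
        obtain ⟨b, hb, hfb⟩ := hpa.exists_mem_finset_dvd h
        exact hnd a (Finset.mem_insert_self a s) b (Finset.mem_insert_of_mem hb)
          (fun hab => ha (hab ▸ hb)) hfb
      · exact h
    obtain ⟨m', hm'⟩ := h2
    rw [Finset.prod_insert ha]
    exact ⟨m', by rw [hm, hm']; ring⟩

lemma VD_eq_pairs (d : ℕ) :
    VD d = ∏ p ∈ Finset.univ.filter (fun p : Fin d × Fin d => p.1 < p.2), (X p.2 - X p.1) := by
  rw [VD, ← Finset.prod_sigma (Finset.univ : Finset (Fin d)) (fun i => Finset.Ioi i)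
    (fun x => (X x.2 - X x.1 : MvPolynomial (Fin d) ℚ))]
  refine Finset.prod_nbij (fun x => (x.1, x.2)) ?_ ?_ ?_ ?_
  · intro x hx
    simp only [Finset.mem_sigma, Finset.mem_Ioi] at hx
    simp [hx.2]
  · intro x hx y hy hxy
    simp only [Prod.mk.injEq] at hxy
    exact Sigma.ext hxy.1 (heq_of_eq hxy.2)
  · intro p hp
    simp only [Finset.coe_filter, Set.mem_setOf_eq] at hp
    exact ⟨⟨p.1, p.2⟩, by simp [hp.2], rfl⟩
  · intro x _; rfl

lemma subMap_rename_swap {d : ℕ} (i j : Fin d) (q : MvPolynomial (Fin d) ℚ) :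
    subMap d i j (rename ⇑(Equiv.swap i j) q) = subMap d i j q := by
  have h : (subMap d i j).comp (rename ⇑(Equiv.swap i j)) = subMap d i j := by
    apply MvPolynomial.algHom_ext
    intro t
    simp only [AlgHom.comp_apply, rename_X]
    rw [subMap_X, subMap_X]
    by_cases hti : t = i
    · rw [hti, Equiv.swap_apply_left, if_pos rfl]
      by_cases hji : j = i
      · rw [if_pos hji, hji]
      · rw [if_neg hji]
    · by_cases htj : t = j
      · rw [htj, Equiv.swap_apply_right, if_pos rfl]
        by_cases hji : j = i
        · rw [if_pos hji, hji]
        · rw [if_neg hji]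
      · rw [Equiv.swap_apply_of_ne_of_ne hti htj, if_neg hti]
  exact DFunLike.congr_fun h q

lemma subMap_aD_eq_zero {d : ℕ} (k : Fin d → ℕ) {i j : Fin d} (hij : i ≠ j) :
    subMap d i j (aD d k) = 0 := by
  have h1 : subMap d i j (aD d k) = subMap d i j (rename ⇑(Equiv.swap i j) (aD d k)) :=
    (subMap_rename_swap i j _).symm
  rw [rename_perm_aD, Equiv.Perm.sign_swap hij, map_zsmul] at h1
  have h1' : subMap d i j (aD d k) = - subMap d i j (aD d k) := by
    simpa using h1
  have h2 : (2 : ℚ) • subMap d i j (aD d k) = 0 := by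
    rw [two_smul]
    nth_rewrite 1 [h1']
    ring
  have h3 := congrArg (fun z => (2 : ℚ)⁻¹ • z) h2
  simpa [smul_smul] using h3

lemma VD_dvd_aD (d : ℕ) (k : Fin d → ℕ) : VD d ∣ aD d k := by
  rw [VD_eq_pairs]
  refine prod_primes_dvd'' _ _ (aD d k) ?_ ?_ ?_
  · intro p hp
    simp only [Finset.mem_filter] at hp
    exact prime_X_sub p.1 p.2 (ne_of_gt hp.2)
  · intro p hp
    simp only [Finset.mem_filter] at hp
    rw [subMap_dvd_iff p.1 p.2 (ne_of_gt hp.2)]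
    exact subMap_aD_eq_zero k (ne_of_lt hp.2)
  · intro p hp q hq hpq
    simp only [Finset.mem_filter] at hp hq
    refine not_dvd_pairs hp.2 hq.2 ?_
    intro h
    exact hpq (Prod.ext (congrArg Prod.fst h) (congrArg Prod.snd h))

lemma aD_eq_VD_mul (d : ℕ) (k : Fin d → ℕ) :
    ∃ s : MvPolynomial (Fin d) ℚ, aD d k = VD d * s ∧ s.IsSymmetric := by
  obtain ⟨s, hs⟩ := VD_dvd_aD d k
  refine ⟨s, hs, ?_⟩
  have hswap : ∀ x y : Fin d, x ≠ y → rename ⇑(Equiv.swap x y) s = s := by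
    intro x y hxy
    have h1 : rename ⇑(Equiv.swap x y) (aD d k)
        = rename ⇑(Equiv.swap x y) (VD d) * rename ⇑(Equiv.swap x y) s := by
      rw [hs, map_mul]
    rw [rename_perm_aD, rename_perm_VD, Equiv.Perm.sign_swap hxy] at h1
    simp only [Units.val_neg, Units.val_one, neg_smul, one_smul] at h1
    rw [hs] at h1
    have h2 : VD d * s = VD d * rename ⇑(Equiv.swap x y) s := by
      have := congrArg (fun z => -z) h1
      simp only [neg_neg] at this
      rw [this]
      ring
    exact (mul_left_cancel₀ (VD_ne_zero d) h2).symm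
  intro e
  refine Equiv.Perm.swap_induction_on e ?_ ?_
  · rw [Equiv.Perm.coe_one, rename_id, AlgHom.id_apply]
  · intro f x y hxy ih
    rw [show ⇑(Equiv.swap x y * f) = ⇑(Equiv.swap x y) ∘ ⇑f from rfl, ← rename_rename]
    rw [ih]
    exact hswap x y hxy

noncomputable def AS (d : ℕ) : MvPolynomial (Fin d) ℚ →ₗ[ℚ] MvPolynomial (Fin d) ℚ :=
  ∑ w : Equiv.Perm (Fin d), ((Equiv.Perm.sign w : ℤ) : ℚ) • (rename (R := ℚ) ⇑w).toLinearMap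

lemma AS_apply {d : ℕ} (p : MvPolynomial (Fin d) ℚ) :
    AS d p = ∑ w : Equiv.Perm (Fin d), ((Equiv.Perm.sign w : ℤ) : ℚ) • rename ⇑w p := by
  rw [AS, LinearMap.sum_apply]
  refine Finset.sum_congr rfl fun w _ => ?_
  rw [LinearMap.smul_apply]
  rfl

/-- The span of the bialternants over strictly monotone exponents. -/
noncomputable def SpanA (d : ℕ) : Submodule ℚ (MvPolynomial (Fin d) ℚ) :=
  Submodule.span ℚ (Set.range fun k : {k : Fin d → ℕ // StrictMono k} => aD d k.1)

lemma mapDomain_eq_sum {d : ℕ} (w : Equiv.Perm (Fin d)) (m : Fin d →₀ ℕ) :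
    Finsupp.mapDomain ⇑w m = ∑ i, Finsupp.single (w i) (m i) := by
  ext t
  rw [Finsupp.mapDomain_equiv_apply, sum_single_perm_apply]
  rfl

lemma aD_zero_of_not_injective {d : ℕ} {k : Fin d → ℕ} (h : ¬ Function.Injective k) :
    aD d k = 0 := by
  rw [Function.not_injective_iff] at h
  obtain ⟨a, b, hab, hne⟩ := h
  have h1 : (fun i => k (Equiv.swap a b i)) = k := by
    funext i
    rcases Equiv.swap_apply_def a b i with _
    by_cases hia : i = a
    · rw [hia, Equiv.swap_apply_left, ← hab]
    · by_cases hib : i = b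
      · rw [hib, Equiv.swap_apply_right, hab]
      · rw [Equiv.swap_apply_of_ne_of_ne hia hib]
  have h2 := aD_comp_perm k (Equiv.swap a b)
  rw [h1, Equiv.Perm.sign_swap hne] at h2
  have h3 : aD d k = - aD d k := by simpa using h2
  have h4 : (2 : ℚ) • aD d k = 0 := by
    rw [two_smul]
    nth_rewrite 1 [h3]
    ring
  have h5 := congrArg (fun z => (2 : ℚ)⁻¹ • z) h4
  simpa [smul_smul] using h5

lemma aD_mem_span (d : ℕ) (k : Fin d → ℕ) : aD d k ∈ SpanA d := by
  by_cases hinj : Function.Injective k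
  · set τ := Tuple.sort k with hτ
    have hmono : StrictMono (k ∘ ⇑τ) :=
      (Tuple.monotone_sort k).strictMono_of_injective (hinj.comp τ.injective)
    have h2 := aD_comp_perm k τ
    have hmem : aD d (fun i => k (τ i)) ∈ SpanA d :=
      Submodule.subset_span ⟨⟨k ∘ ⇑τ, hmono⟩, rfl⟩
    rcases Int.units_eq_one_or (Equiv.Perm.sign τ) with h | h
    · rw [h] at h2
      simp only [Units.val_one, one_smul] at h2
      rw [← h2]
      exact hmem
    · rw [h] at h2
      simp only [Units.val_neg, Units.val_one, neg_smul, one_smul] at h2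
      rw [show aD d k = - aD d (fun i => k (τ i)) from by rw [h2]; ring]
      exact Submodule.neg_mem _ hmem
  · rw [aD_zero_of_not_injective hinj]
    exact Submodule.zero_mem _
lemma AS_monomial {d : ℕ} (m : Fin d →₀ ℕ) (c : ℚ) :
    AS d (monomial m c) = c • aD d ⇑m := by
  rw [AS_apply, aD_monomial, Finset.smul_sum]
  refine Finset.sum_congr rfl fun w _ => ?_
  rw [rename_monomial, mapDomain_eq_sum]
  rcases Int.units_eq_one_or (Equiv.Perm.sign w) with h | h <;>
    simp [h, smul_monomial]

lemma AS_mem_span (d : ℕ) (p : MvPolynomial (Fin d) ℚ) : AS d p ∈ SpanA d := by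
  rw [← support_sum_monomial_coeff p, map_sum]
  refine Submodule.sum_mem _ fun m _ => ?_
  rw [AS_monomial]
  exact Submodule.smul_mem _ _ (aD_mem_span d ⇑m)

lemma VD_mul_symm_mem (d : ℕ) (p : MvPolynomial (Fin d) ℚ) (hp : p.IsSymmetric) :
    VD d * p ∈ SpanA d := by
  have hAS : AS d (VD d * p) = (d.factorial : ℚ) • (VD d * p) := by
    rw [AS_apply]
    have hterm : ∀ w : Equiv.Perm (Fin d),
        ((Equiv.Perm.sign w : ℤ) : ℚ) • rename ⇑w (VD d * p) = VD d * p := by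
      intro w
      rw [map_mul, rename_perm_VD, hp w]
      rcases Int.units_eq_one_or (Equiv.Perm.sign w) with h | h <;> simp [h]
    rw [Finset.sum_congr rfl (fun w _ => hterm w), Finset.sum_const, Finset.card_univ,
      Fintype.card_perm, Fintype.card_fin]
    rw [← Nat.cast_smul_eq_nsmul ℚ]
  have hne : ((d.factorial : ℚ)) ≠ 0 := by
    exact_mod_cast Nat.factorial_ne_zero d
  have : VD d * p = (d.factorial : ℚ)⁻¹ • AS d (VD d * p) := by
    rw [hAS, smul_smul, inv_mul_cancel₀ hne, one_smul]
  rw [this]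
  exact Submodule.smul_mem _ _ (AS_mem_span d _)

lemma span_aD_eq (d : ℕ) :
    SpanA d = Submodule.map (LinearMap.mulLeft ℚ (VD d))
      (Subalgebra.toSubmodule (symmetricSubalgebra (Fin d) ℚ)) := by
  apply le_antisymm
  · rw [SpanA, Submodule.span_le]
    rintro z ⟨k, rfl⟩
    obtain ⟨s, hs, hsym⟩ := aD_eq_VD_mul d k.1
    exact ⟨s, (mem_symmetricSubalgebra s).mpr hsym, by rw [LinearMap.mulLeft_apply, ← hs]⟩
  · rintro z ⟨p, hp, rfl⟩
    rw [LinearMap.mulLeft_apply]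
    exact VD_mul_symm_mem d p ((mem_symmetricSubalgebra p).mp hp)

noncomputable def algL (d : ℕ) : MvPolynomial (Fin d) ℚ →ₗ[ℚ] FF d where
  toFun := algebraMap (MvPolynomial (Fin d) ℚ) (FF d)
  map_add' := map_add _
  map_smul' c p := map_rat_smul (algebraMap (MvPolynomial (Fin d) ℚ) (FF d)) c p

noncomputable def LL (d : ℕ) : MvPolynomial (Fin d) ℚ →ₗ[ℚ] FF d :=
  (LinearMap.mulLeft ℚ
    ((algebraMap (MvPolynomial (Fin d) ℚ) (FF d) (VD d))⁻¹)).comp (algL d)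

lemma LL_apply (d : ℕ) (p : MvPolynomial (Fin d) ℚ) :
    LL d p = (algebraMap (MvPolynomial (Fin d) ℚ) (FF d) (VD d))⁻¹
      * algebraMap (MvPolynomial (Fin d) ℚ) (FF d) p := rfl

lemma algV_ne_zero (d : ℕ) : algebraMap (MvPolynomial (Fin d) ℚ) (FF d) (VD d) ≠ 0 := by
  intro h
  refine VD_ne_zero d (IsFractionRing.injective (MvPolynomial (Fin d) ℚ) (FF d) ?_)
  rw [h, map_zero]

lemma LL_ker (d : ℕ) : LinearMap.ker (LL d) = ⊥ := by
  rw [LinearMap.ker_eq_bot']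
  intro p hp
  rw [LL_apply] at hp
  have h1 : algebraMap (MvPolynomial (Fin d) ℚ) (FF d) p = 0 := by
    have hinv : (algebraMap (MvPolynomial (Fin d) ℚ) (FF d) (VD d))⁻¹ ≠ 0 :=
      inv_ne_zero (algV_ne_zero d)
    rcases mul_eq_zero.mp hp with h | h
    · exact absurd h hinv
    · exact h
  exact IsFractionRing.injective (MvPolynomial (Fin d) ℚ) (FF d) (by rw [h1, map_zero])

lemma iterProd_eq_LL (d : ℕ) (k : Fin d → ℕ) : iterProd d k = LL d (aD d k) := by
  rw [iterProd_eq_aD, LL_apply, mul_comm]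

lemma LL_comp_mulVD (d : ℕ) :
    (LL d).comp (LinearMap.mulLeft ℚ (VD d)) = algL d := by
  refine LinearMap.ext fun p => ?_
  rw [LinearMap.comp_apply, LinearMap.mulLeft_apply, LL_apply, map_mul, ← mul_assoc,
    inv_mul_cancel₀ (algV_ne_zero d), one_mul]
  rfl

lemma part2 (d : ℕ) :
    LinearIndependent ℚ
        (fun k : {k : Fin d → ℕ // StrictMono k} => iterProd d k.1) ∧
      Submodule.span ℚ
          (Set.range fun k : {k : Fin d → ℕ // StrictMono k} => iterProd d k.1) =
        symPart d := by
  have hfun : (fun k : {k : Fin d → ℕ // StrictMono k} => iterProd d k.1)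
      = ⇑(LL d) ∘ (fun k : {k : Fin d → ℕ // StrictMono k} => aD d k.1) := by
    funext k
    exact iterProd_eq_LL d k.1
  constructor
  · rw [hfun]
    exact LinearIndependent.map' (aD_linearIndependent d) (LL d) (LL_ker d)
  · rw [hfun, Set.range_comp, Submodule.span_image]
    rw [show Submodule.span ℚ
        (Set.range fun k : {k : Fin d → ℕ // StrictMono k} => aD d k.1) = SpanA d from rfl]
    rw [span_aD_eq, ← Submodule.map_comp, LL_comp_mulVD]
    rw [symPart]
    have hset : {z : FF d | ∃ p : MvPolynomial (Fin d) ℚ,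
        p.IsSymmetric ∧ algebraMap (MvPolynomial (Fin d) ℚ) (FF d) p = z}
        = ⇑(algL d) '' ↑(Subalgebra.toSubmodule (symmetricSubalgebra (Fin d) ℚ)) := by
      ext z
      constructor
      · rintro ⟨p, hp, rfl⟩
        exact ⟨p, (mem_symmetricSubalgebra p).mpr hp, rfl⟩
      · rintro ⟨p, hp, rfl⟩
        exact ⟨p, (mem_symmetricSubalgebra p).mp hp, rfl⟩
    rw [hset, Submodule.span_image, Submodule.span_eq]

lemma iterProd_one (k : Fin 1 → ℕ) : iterProd 1 k = psiF (k 0) := by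
  rw [iterProd_eq_aD]
  have hV : VD 1 = 1 := by
    rw [VD, Fin.prod_univ_one]
    rw [show Finset.Ioi (0 : Fin 1) = ∅ from by
      ext j; simp [Fin.lt_iff_val_lt_val, Fin.val_eq_zero]]
    rw [Finset.prod_empty]
  have haD : aD 1 k = X 0 ^ k 0 := by
    rw [aD]
    rw [Finset.sum_eq_single_of_mem (1 : Equiv.Perm (Fin 1)) (Finset.mem_univ _)
      (fun b _ hb => absurd (Subsingleton.elim b 1) hb)]
    rw [Fin.prod_univ_one]
    simp
  rw [hV, haD, map_one, inv_one, mul_one, psiF]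

lemma shuffle_psi (a b : ℕ) : shuffleMul (psiF a) (psiF b) = iterProd 2 ![a, b] := by
  rw [show iterProd 2 ![a, b]
    = shuffleMul (iterProd 1 (fun i => ![a, b] i.castSucc)) (psiF (![a, b] (Fin.last 1)))
    from rfl]
  rw [iterProd_one]
  congr 1

lemma part1 (a b : ℕ) : shuffleMul (psiF a) (psiF b) = -shuffleMul (psiF b) (psiF a) := by
  rw [shuffle_psi, shuffle_psi, iterProd_eq_aD, iterProd_eq_aD]
  have hswap : (fun i => ![b, a] (Equiv.swap (0 : Fin 2) 1 i)) = ![a, b] := by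
    funext i
    fin_cases i <;> simp [Equiv.swap_apply_left, Equiv.swap_apply_right]
  have h := aD_comp_perm ![b, a] (Equiv.swap (0 : Fin 2) 1)
  rw [hswap, Equiv.Perm.sign_swap (by decide)] at h
  have h2 : aD 2 ![a, b] = - aD 2 ![b, a] := by simpa using h
  rw [h2, map_neg, neg_mul]

/-- the shuffle algebra `⊕_d ℚ[x_1,…,x_d]^{S_d}` is the exterior
algebra on `ψ_0, ψ_1, ψ_2, …`: the generators anti-commute, and the monomials
`ψ_{k_1} * ⋯ * ψ_{k_d}` with `k_1 < ⋯ < k_d` form a `ℚ`-basis of the degree-`d`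
component `ℚ[x_1,…,x_d]^{S_d}`. -/
theorem coha_point_exterior_algebra :
    (∀ i j : ℕ, shuffleMul (psiF i) (psiF j) = -shuffleMul (psiF j) (psiF i)) ∧
    (∀ d : ℕ,
      LinearIndependent ℚ
        (fun k : {k : Fin d → ℕ // StrictMono k} => iterProd d k.1) ∧
      Submodule.span ℚ
          (Set.range fun k : {k : Fin d → ℕ // StrictMono k} => iterProd d k.1) =
        symPart d) :=
  ⟨part1, part2⟩
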